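/- For m ≥ 2 and θ ∈ I = [-π + p*, p*], the function θ*(θ, m) = g^{-1}(t(m)g(θ)) satisfies the uniform bound |θ*(θ, m)| ≤ C e^{-mπ/ρ} for a constant C depending only on ρ. -/

import Mathlib

open Real

lemma sin_chord_bound (q : ℝ) (hq0 : 0 < q) (hqπ : q < π) :
    ∀ x ∈ Set.Icc (0:ℝ) q, Real.sin q / q * x ≤ Real.sin x := by
  intro x hx
  rcases eq_or_lt_of_le hx.1 with h0 | h0
  · simp [← h0]
  have hconc := strictConcaveOn_sin_Icc.concaveOn
  have ht1 : x / q ≤ 1 := by rw [div_le_one hq0]; exact hx.2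
  have ht0 : 0 ≤ x / q := by positivity
  have key : (1 - x / q) • Real.sin 0 + (x / q) • Real.sin q
      ≤ Real.sin ((1 - x / q) • (0:ℝ) + (x / q) • q) :=
    hconc.2 ⟨le_refl 0, Real.pi_pos.le⟩ ⟨hq0.le, hqπ.le⟩ (by linarith) ht0 (by ring)
  have hxq : (1 - x / q) • (0:ℝ) + (x / q) • q = x := by
    field_simp
    simp [hq0.ne']
  rw [hxq] at key
  calc Real.sin q / q * x = (1 - x / q) • Real.sin 0 + (x / q) • Real.sin q := by
        simp [smul_eq_mul]; ring
    _ ≤ Real.sin x := key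

/-- For `m ≥ 2` and `θ ∈ I`, the function `θ*(θ, m)` (characterized by `θ*(θ,m) ∈ I` and
`g(θ*(θ, m)) = t(m) g(θ)`) satisfies the uniform bound `|θ*(θ, m)| ≤ C e^{-mπ/ρ}` for a
constant `C` depending only on `ρ`. -/
theorem stmt14 (ρ : ℝ) (hρ : 0 < ρ)
    (g : ℝ → ℝ) (hg : g = fun θ => Real.exp (-θ / ρ) * Real.sin θ)
    (p : ℝ) (hp : p = Real.arctan ρ)
    (t : ℕ → ℝ) (ht : t = fun (m : ℕ) => (-1 : ℝ) ^ m * Real.exp (-(m : ℝ) * π / ρ))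
    (θstar : ℝ → ℕ → ℝ)
    (hθ : ∀ θ ∈ Set.Icc (-π + p) p, ∀ m : ℕ, 2 ≤ m →
      θstar θ m ∈ Set.Icc (-π + p) p ∧ g (θstar θ m) = t m * g θ) :
    ∃ C : ℝ, 0 < C ∧ ∀ θ ∈ Set.Icc (-π + p) p, ∀ m : ℕ, 2 ≤ m →
      |θstar θ m| ≤ C * Real.exp (-(m : ℝ) * π / ρ) := by
  have hπ : (0:ℝ) < π := Real.pi_pos
  have hp0 : 0 < p := by rw [hp, ← Real.arctan_zero]; exact Real.arctan_strictMono hρ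
  have hp2 : p < π / 2 := hp ▸ Real.arctan_lt_pi_div_two ρ
  have hsp : 0 < Real.sin p := Real.sin_pos_of_pos_of_lt_pi hp0 (by linarith)
  have hπp : 0 < π - p := by linarith
  refine ⟨Real.exp (π / ρ) * (π - p) / Real.sin p, by positivity, ?_⟩
  intro θ hθI m hm
  obtain ⟨hmem, heq⟩ := hθ θ hθI m hm
  set ψ := θstar θ m with hψdef
  have hψ1 : -π + p ≤ ψ := hmem.1
  have hψ2 : ψ ≤ p := hmem.2
  have habs : |ψ| ≤ π - p := abs_le.mpr ⟨by linarith, by linarith⟩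
  -- |sin ψ| = sin |ψ|
  have hsinabs : |Real.sin ψ| = Real.sin |ψ| := by
    rcases le_or_gt 0 ψ with h | h
    · rw [abs_of_nonneg h, abs_of_nonneg]
      exact Real.sin_nonneg_of_nonneg_of_le_pi h (by linarith)
    · have hs : 0 ≤ Real.sin (-ψ) :=
        Real.sin_nonneg_of_nonneg_of_le_pi (by linarith) (by linarith)
      rw [Real.sin_neg] at hs
      rw [abs_of_neg h, abs_of_nonpos (by linarith), Real.sin_neg]
  -- lower bound on |sin ψ|
  have hchord := sin_chord_bound (π - p) hπp (by linarith) |ψ| ⟨abs_nonneg _, habs⟩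
  rw [Real.sin_pi_sub] at hchord
  have hlow : Real.sin p / (π - p) * |ψ| ≤ |Real.sin ψ| := hsinabs ▸ hchord
  -- take absolute values in heq
  have heq' : Real.exp (-ψ / ρ) * |Real.sin ψ|
      = Real.exp (-(m : ℝ) * π / ρ) * (Real.exp (-θ / ρ) * |Real.sin θ|) := by
    have h := congrArg abs heq
    rw [hg, ht] at h
    simp only [abs_mul, abs_pow, abs_neg, abs_one, one_pow, one_mul,
      Real.abs_exp] at h
    exact h
  -- bound RHS
  have hθ1 : -π + p ≤ θ := hθI.1
  have hrhs : Real.exp (-(m : ℝ) * π / ρ) * (Real.exp (-θ / ρ) * |Real.sin θ|)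
      ≤ Real.exp (-(m : ℝ) * π / ρ) * Real.exp ((π - p) / ρ) := by
    apply mul_le_mul_of_nonneg_left _ (Real.exp_nonneg _)
    calc Real.exp (-θ / ρ) * |Real.sin θ| ≤ Real.exp (-θ / ρ) * 1 :=
          mul_le_mul_of_nonneg_left (Real.abs_sin_le_one θ) (Real.exp_nonneg _)
      _ = Real.exp (-θ / ρ) := mul_one _
      _ ≤ Real.exp ((π - p) / ρ) := by
          apply Real.exp_le_exp.mpr
          apply (div_le_div_iff_of_pos_right hρ).mpr
          linarith
  -- combine
  have hexpψ : Real.exp (-p / ρ) ≤ Real.exp (-ψ / ρ) := by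
    apply Real.exp_le_exp.mpr
    apply (div_le_div_iff_of_pos_right hρ).mpr
    linarith
  have hE : Real.exp ((π - p) / ρ) = Real.exp (π / ρ) * Real.exp (-p / ρ) := by
    rw [← Real.exp_add]
    ring_nf
  have h1 : Real.exp (-p / ρ) * (Real.sin p / (π - p) * |ψ|)
      ≤ Real.exp (-(m : ℝ) * π / ρ) * (Real.exp (π / ρ) * Real.exp (-p / ρ)) := by
    calc Real.exp (-p / ρ) * (Real.sin p / (π - p) * |ψ|)
        ≤ Real.exp (-ψ / ρ) * (Real.sin p / (π - p) * |ψ|) := by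
          apply mul_le_mul_of_nonneg_right hexpψ
          positivity
      _ ≤ Real.exp (-ψ / ρ) * |Real.sin ψ| :=
          mul_le_mul_of_nonneg_left hlow (Real.exp_nonneg _)
      _ = Real.exp (-(m : ℝ) * π / ρ) * (Real.exp (-θ / ρ) * |Real.sin θ|) := heq'
      _ ≤ Real.exp (-(m : ℝ) * π / ρ) * Real.exp ((π - p) / ρ) := hrhs
      _ = Real.exp (-(m : ℝ) * π / ρ) * (Real.exp (π / ρ) * Real.exp (-p / ρ)) := by
          rw [hE]
  have h2 : Real.sin p / (π - p) * |ψ| ≤ Real.exp (-(m : ℝ) * π / ρ) * Real.exp (π / ρ) := by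
    have hep : 0 < Real.exp (-p / ρ) := Real.exp_pos _
    nlinarith [h1]
  rw [div_mul_eq_mul_div, div_le_iff₀ hπp] at h2
  rw [div_mul_eq_mul_div, le_div_iff₀ hsp]
  nlinarith [h2]
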